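/- Let δ ∈ (0,1) and let U ∈ 𝒰 be differentiable on (0,π/2] with t·U'(t) ≤ (1 − δ)·U(t) for all 0 < t ≤ π/2. Let ω_U be an increasing function with ω_U(x) → ∞ satisfying η_U(x/ω_U(x)) = ω_U(x) for all sufficiently large x, let τ > 1, and let V : ℝ → ℝ be any measurable function; define φ on the unit circle by φ(e^{it}) := exp(−U(t) − iV(t)). Then there is N such that for every integer n ≥ N, every ε with 0 < ε ≤ e^{−τ·ω_U(n)}, every r ∈ (0,1), and every Carleson square Q with side length ℓ(Q) = ε: (1/(2π))·Leb({t ∈ [−π,π] : |φ(e^{it})| > r and φ(e^{it}) ∈ Q}) ≤ e^{−δ·n/ω_U(n)}·ε. -/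

import Mathlib

open MeasureTheory Filter Set Complex

noncomputable section

noncomputable def hU (U : ℝ → ℝ) (t : ℝ) : ℝ := ∫ x in t..Real.pi, U x / x ^ 2

def ClassU (U : ℝ → ℝ) : Prop :=
  Continuous U ∧ (∀ t, U (-t) = U t) ∧ Function.Periodic U (2 * Real.pi) ∧
  U 0 = 0 ∧ MonotoneOn U (Set.Icc 0 Real.pi) ∧
  (∀ t, 0 < t → t ≤ Real.pi → 0 < U t) ∧
  Tendsto (fun t => hU U t) (nhdsWithin 0 (Set.Ioi 0)) atTop

noncomputable def etaU (U : ℝ → ℝ) (x : ℝ) : ℝ := -Real.log (U (Real.exp (-x)))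

/-- The Carleson square `Q(r₀,t₀)`. -/
def carlesonSquare (r₀ t₀ : ℝ) : Set ℂ :=
  {z : ℂ | ∃ ρ s : ℝ, r₀ ≤ ρ ∧ ρ ≤ 1 ∧ |s - t₀| ≤ (1 - r₀) * Real.pi ∧
    z = (ρ : ℂ) * Complex.exp ((s : ℂ) * Complex.I)}

lemma mykey (δ : ℝ) (U U' : ℝ → ℝ)
    (hc : Continuous U) (hpos : ∀ t, 0 < t → t ≤ Real.pi → 0 < U t)
    (hderiv : ∀ t ∈ Set.Ioc (0 : ℝ) (Real.pi / 2), HasDerivAt U (U' t) t)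
    (hbound : ∀ t ∈ Set.Ioc (0 : ℝ) (Real.pi / 2), t * U' t ≤ (1 - δ) * U t) :
    ∀ s t : ℝ, 0 < s → s ≤ t → t ≤ Real.pi / 2 →
      U t * (s / t) ^ (1 - δ) ≤ U s := by
  have hπ := Real.pi_pos
  have hposI : ∀ x ∈ Set.Ioc (0 : ℝ) (Real.pi / 2), 0 < U x := fun x hx =>
    hpos x hx.1 (hx.2.trans (by linarith))
  set g : ℝ → ℝ := fun x => Real.log (U x) - (1 - δ) * Real.log x with hg_def
  have hgcont : ContinuousOn g (Set.Ioc (0 : ℝ) (Real.pi / 2)) := by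
    apply ContinuousOn.sub
    · exact ContinuousOn.log hc.continuousOn (fun x hx => (hposI x hx).ne')
    · exact continuousOn_const.mul (Real.continuousOn_log.mono
        (fun x hx => by simpa using hx.1.ne'))
  have hganti : AntitoneOn g (Set.Ioc (0 : ℝ) (Real.pi / 2)) := by
    apply antitoneOn_of_deriv_nonpos (convex_Ioc _ _) hgcont
    · intro x hx
      rw [interior_Ioc] at hx
      have hx0 : 0 < x := hx.1
      have hxI : x ∈ Set.Ioc (0 : ℝ) (Real.pi / 2) := ⟨hx.1, hx.2.le⟩
      have hUx : 0 < U x := hposI x hxI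
      have hD : HasDerivAt g (U' x / U x - (1 - δ) * x⁻¹) x := by
        exact ((hderiv x hxI).log hUx.ne').sub
          ((Real.hasDerivAt_log hx0.ne').const_mul (1 - δ))
      exact hD.differentiableAt.differentiableWithinAt
    · intro x hx
      rw [interior_Ioc] at hx
      have hx0 : 0 < x := hx.1
      have hxI : x ∈ Set.Ioc (0 : ℝ) (Real.pi / 2) := ⟨hx.1, hx.2.le⟩
      have hUx : 0 < U x := hposI x hxI
      have hD : HasDerivAt g (U' x / U x - (1 - δ) * x⁻¹) x :=
        ((hderiv x hxI).log hUx.ne').sub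
          ((Real.hasDerivAt_log hx0.ne').const_mul (1 - δ))
      rw [hD.deriv]
      have h1 : U' x / U x ≤ (1 - δ) / x := by
        rw [div_le_div_iff₀ hUx hx0]
        nlinarith [hbound x hxI]
      have : (1 - δ) * x⁻¹ = (1 - δ) / x := by ring
      linarith [h1, this.ge]
  intro s t hs hst ht
  have hsI : s ∈ Set.Ioc (0 : ℝ) (Real.pi / 2) := ⟨hs, hst.trans ht⟩
  have htI : t ∈ Set.Ioc (0 : ℝ) (Real.pi / 2) := ⟨hs.trans_le hst, ht⟩
  have ht0 : 0 < t := hs.trans_le hst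
  have hUs : 0 < U s := hposI s hsI
  have hUt : 0 < U t := hposI t htI
  have hg := hganti hsI htI hst
  simp only [hg_def] at hg
  have hst0 : 0 < s / t := div_pos hs ht0
  have hlhs : 0 < U t * (s / t) ^ (1 - δ) :=
    mul_pos hUt (Real.rpow_pos_of_pos hst0 _)
  rw [← Real.log_le_log_iff hlhs hUs]
  rw [Real.log_mul hUt.ne' (Real.rpow_pos_of_pos hst0 _).ne', Real.log_rpow hst0,
    Real.log_div hs.ne' ht0.ne']
  linarith [hg]

set_option maxHeartbeats 1000000 in
theorem stmt17 (δ : ℝ) (hδ₀ : 0 < δ) (hδ₁ : δ < 1)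
    (U U' : ℝ → ℝ) (hU_mem : ClassU U)
    (hderiv : ∀ t ∈ Set.Ioc (0 : ℝ) (Real.pi / 2), HasDerivAt U (U' t) t)
    (hbound : ∀ t ∈ Set.Ioc (0 : ℝ) (Real.pi / 2), t * U' t ≤ (1 - δ) * U t)
    (ω : ℝ → ℝ) (hω_mono : Monotone ω) (hω_top : Tendsto ω atTop atTop)
    (x₂ : ℝ) (hωeq : ∀ x : ℝ, x₂ ≤ x → etaU U (x / ω x) = ω x)
    (τ : ℝ) (hτ : 1 < τ)
    (V : ℝ → ℝ) (hV : Measurable V)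
    (φ : ℝ → ℂ) (hφ : ∀ t, φ t = Complex.exp (-(U t : ℂ) - Complex.I * (V t : ℂ))) :
    ∃ N : ℕ, ∀ n : ℕ, N ≤ n →
      ∀ ε : ℝ, 0 < ε → ε ≤ Real.exp (-τ * ω n) →
        ∀ r : ℝ, 0 < r → r < 1 → ∀ t₀ : ℝ,
          (volume {t : ℝ | t ∈ Set.Icc (-Real.pi) Real.pi ∧ r < ‖φ t‖ ∧
              φ t ∈ carlesonSquare (1 - ε) t₀}).toReal / (2 * Real.pi)
            ≤ Real.exp (-δ * n / ω n) * ε := by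
  have hπ := Real.pi_pos
  have h1δ : (0 : ℝ) < 1 - δ := by linarith
  have hτ1 : (0 : ℝ) < τ - 1 := by linarith
  obtain ⟨hcont, heven, hper, hU0, hmono, hpos, _⟩ := hU_mem
  have hπ2π : Real.pi / 2 ≤ Real.pi := by linarith
  have hUπ2 : 0 < U (Real.pi / 2) := hpos _ (by linarith) hπ2π
  set K : ℝ := (1 - δ) * Real.log (Real.pi / 2) - Real.log (U (Real.pi / 2)) with hK_def
  set C : ℝ := (1 - δ) * K + Real.log 2 - (1 - δ) * Real.log Real.pi with hC_def
  set W : ℝ := max (max 1 (1 / (τ - 1))) (C / (δ * (τ - 1))) with hW_def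
  obtain ⟨X, hX⟩ := eventually_atTop.mp (hω_top.eventually_ge_atTop W)
  refine ⟨⌈max X x₂⌉₊, fun n hn ε hε0 hε1 r hr0 hr1 t₀ => ?_⟩
  have hnR : max X x₂ ≤ (n : ℝ) := Nat.ceil_le.mp hn
  have hwW : W ≤ ω n := hX n (le_trans (le_max_left _ _) hnR)
  set w : ℝ := ω (n : ℝ) with hw_def
  have hw1 : 1 ≤ w := le_trans ((le_max_left _ _).trans (le_max_left _ _)) hwW
  have hw0 : 0 < w := by linarith
  have hwτ : 1 ≤ (τ - 1) * w := by
    have h := le_trans ((le_max_right 1 (1/(τ-1))).trans (le_max_left _ _)) hwW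
    rw [div_le_iff₀ hτ1] at h; linarith
  have hwC : C ≤ δ * (τ - 1) * w := by
    have h := le_trans (le_max_right _ _) hwW
    rw [div_le_iff₀ (by positivity)] at h; linarith
  set m : ℝ := (n : ℝ) / w with hm_def
  have hm0 : 0 ≤ m := div_nonneg (Nat.cast_nonneg n) hw0.le
  set a : ℝ := Real.exp (-m) with ha_def
  have ha0 : 0 < a := Real.exp_pos _
  have ha1 : a ≤ 1 := by
    rw [ha_def, ← Real.exp_zero]; exact Real.exp_le_exp.2 (by linarith)
  have haπ2 : a ≤ Real.pi / 2 := ha1.trans (by linarith [Real.pi_gt_three])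
  have hUa0 : 0 < U a := hpos _ ha0 (ha1.trans (by linarith [Real.pi_gt_three]))
  have hUa : U a = Real.exp (-w) := by
    have h := hωeq n (le_trans (le_max_right _ _) hnR)
    simp only [etaU] at h
    have ha' : a = Real.exp (-((n : ℝ) / ω (n : ℝ))) := by
      rw [ha_def, hm_def, hw_def]
    rw [← ha', ← hw_def] at h
    rw [← Real.exp_log hUa0]
    congr 1
    linarith
  have hexp1gt2 : (2 : ℝ) < Real.exp 1 := by
    have := Real.add_one_lt_exp (one_ne_zero (α := ℝ)); linarith
  have hεhalf : ε < 1 / 2 := by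
    have h1 : Real.exp (-τ * w) ≤ Real.exp (-1) := by
      apply Real.exp_le_exp.2
      have hh := mul_le_mul hτ.le hw1 (by norm_num) (by linarith : (0:ℝ) ≤ τ)
      linarith [hh]
    have h2 : Real.exp (-1) < 1 / 2 := by
      rw [Real.exp_neg]
      rw [inv_lt_comm₀ (Real.exp_pos _) (by norm_num)]
      simpa using hexp1gt2
    linarith
  set c : ℝ := -Real.log (1 - ε) with hc_def
  have h1ε0 : 0 < 1 - ε := by linarith
  have hc0 : 0 < c := by
    have := Real.log_neg h1ε0 (by linarith)
    simp only [hc_def]; linarith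
  have hc2ε : c ≤ 2 * ε := by
    have h1 : (1 : ℝ) + 2 * ε ≤ Real.exp (2 * ε) := by
      have := Real.add_one_le_exp (2 * ε); linarith
    have h2 : Real.exp (-(2 * ε)) ≤ 1 - ε := by
      rw [Real.exp_neg]
      rw [inv_le_comm₀ (Real.exp_pos _) h1ε0]
      calc (1 - ε)⁻¹ ≤ 1 + 2 * ε := by
            rw [inv_le_iff_one_le_mul₀' h1ε0]; nlinarith
        _ ≤ Real.exp (2 * ε) := h1
    have h3 : -(2 * ε) ≤ Real.log (1 - ε) := by
      calc -(2 * ε) = Real.log (Real.exp (-(2 * ε))) := (Real.log_exp _).symm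
        _ ≤ Real.log (1 - ε) := Real.log_le_log (Real.exp_pos _) h2
    simp only [hc_def]; linarith
  have hcw : c < Real.exp (-w) := by
    have h1 : 2 * Real.exp (-τ * w) < Real.exp (-w) := by
      have h2 : Real.exp (-w) = Real.exp ((τ - 1) * w) * Real.exp (-τ * w) := by
        rw [← Real.exp_add]; ring_nf
      have h3 : (2 : ℝ) < Real.exp ((τ - 1) * w) :=
        lt_of_lt_of_le hexp1gt2 (Real.exp_le_exp.2 hwτ)
      rw [h2]
      exact mul_lt_mul_of_pos_right h3 (Real.exp_pos _)
    calc c ≤ 2 * ε := hc2ε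
      _ ≤ 2 * Real.exp (-τ * w) := by linarith
      _ < Real.exp (-w) := h1
  set p : ℝ := 1 / (1 - δ) with hp_def
  have hp0 : 0 < p := by positivity
  have hcew0 : 0 < c * Real.exp w := by positivity
  set b : ℝ := a * (c * Real.exp w) ^ p with hb_def
  have hb0 : 0 < b := mul_pos ha0 (Real.rpow_pos_of_pos hcew0 _)
  have hkey := mykey δ U U' hcont hpos hderiv hbound
  -- subset claim
  have hsub : {t : ℝ | t ∈ Set.Icc (-Real.pi) Real.pi ∧ r < ‖φ t‖ ∧
      φ t ∈ carlesonSquare (1 - ε) t₀} ⊆ Set.Icc (-b) b := by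
    intro t ht
    obtain ⟨htI, -, hsq⟩ := ht
    obtain ⟨ρ, s, hρ1, hρ2, -, heq⟩ := hsq
    have hρpos : 0 < ρ := lt_of_lt_of_le (by linarith) hρ1
    have hnφ : ‖φ t‖ = Real.exp (-(U t)) := by
      rw [hφ, Complex.norm_exp]
      congr 1
      simp [Complex.sub_re, Complex.neg_re, Complex.ofReal_re, Complex.mul_re,
        Complex.I_re, Complex.I_im, Complex.ofReal_im]
    have hnφ2 : ‖φ t‖ = ρ := by
      rw [heq, norm_mul, Complex.norm_real, Real.norm_eq_abs, Complex.norm_exp]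
      have h0 : ((s : ℂ) * Complex.I).re = 0 := by
        simp [Complex.mul_re, Complex.I_re, Complex.I_im, Complex.ofReal_im,
          Complex.ofReal_re]
      rw [h0, Real.exp_zero, mul_one, abs_of_pos hρpos]
    have hUt : U t ≤ c := by
      have h1 : 1 - ε ≤ Real.exp (-(U t)) := by rw [← hnφ, hnφ2]; exact hρ1
      have h2 : Real.log (1 - ε) ≤ -(U t) := by
        calc Real.log (1 - ε) ≤ Real.log (Real.exp (-(U t))) :=
              Real.log_le_log h1ε0 h1
          _ = -(U t) := Real.log_exp _
      simp only [hc_def]; linarith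
    have habs : U |t| = U t := by
      rcases abs_cases t with ⟨h, -⟩ | ⟨h, -⟩
      · rw [h]
      · rw [h]; exact heven t
    have hub : |t| ≤ b := by
      by_contra hbt
      push_neg at hbt
      have h0u : 0 < |t| := hb0.trans hbt
      have huπ : |t| ≤ Real.pi := abs_le.2 ⟨htI.1, htI.2⟩
      have hcu : c < U |t| := by
        rcases le_or_gt a |t| with hcase | hcase
        · calc c < Real.exp (-w) := hcw
            _ = U a := hUa.symm
            _ ≤ U |t| := hmono ⟨ha0.le, ha1.trans (by linarith [Real.pi_gt_three])⟩
                ⟨abs_nonneg t, huπ⟩ hcase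
        · have h1 : U a * (|t| / a) ^ (1 - δ) ≤ U |t| :=
            hkey |t| a h0u hcase.le haπ2
          have hba : b / a < |t| / a := by gcongr
          have h2 : (b / a) ^ (1 - δ) < (|t| / a) ^ (1 - δ) :=
            Real.rpow_lt_rpow (by positivity) hba h1δ
          have h3 : b / a = (c * Real.exp w) ^ p := by
            rw [hb_def]; field_simp
          have h4 : ((c * Real.exp w) ^ p) ^ (1 - δ) = c * Real.exp w := by
            rw [← Real.rpow_mul hcew0.le]
            have hp1 : p * (1 - δ) = 1 := by
              rw [hp_def]; field_simp
            rw [hp1, Real.rpow_one]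
          have h6 : Real.exp (-w) * (c * Real.exp w) = c := by
            rw [mul_comm c, ← mul_assoc, ← Real.exp_add]; simp
          calc c = Real.exp (-w) * (c * Real.exp w) := h6.symm
            _ = U a * ((b / a) ^ (1 - δ)) := by rw [hUa, h3, h4]
            _ < U a * ((|t| / a) ^ (1 - δ)) := mul_lt_mul_of_pos_left h2 hUa0
            _ ≤ U |t| := h1
      rw [habs] at hcu
      linarith
    exact abs_le.1 hub
  -- measure estimate
  have hμ : (volume {t : ℝ | t ∈ Set.Icc (-Real.pi) Real.pi ∧ r < ‖φ t‖ ∧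
      φ t ∈ carlesonSquare (1 - ε) t₀}).toReal ≤ 2 * b := by
    have h2 : volume (Set.Icc (-b) b) = ENNReal.ofReal (2 * b) := by
      rw [Real.volume_Icc]; congr 1; ring
    calc (volume {t : ℝ | t ∈ Set.Icc (-Real.pi) Real.pi ∧ r < ‖φ t‖ ∧
          φ t ∈ carlesonSquare (1 - ε) t₀}).toReal
        ≤ (volume (Set.Icc (-b) b)).toReal :=
          ENNReal.toReal_mono (by rw [h2]; exact ENNReal.ofReal_ne_top)
            (measure_mono hsub)
      _ = 2 * b := by rw [h2, ENNReal.toReal_ofReal (by positivity)]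
  -- arithmetic
  have hp1 : 0 ≤ p - 1 := by
    rw [hp_def, le_sub_iff_add_le, zero_add, le_div_iff₀ h1δ, one_mul]
    linarith
  set E : ℝ := p * Real.log 2 + w * (1 - τ * δ) / (1 - δ) with hE_def
  have key1 : (c * Real.exp w) ^ p ≤ ε * Real.exp E := by
    have s1 : (c * Real.exp w) ^ p ≤ (2 * ε * Real.exp w) ^ p :=
      Real.rpow_le_rpow hcew0.le
        (mul_le_mul_of_nonneg_right hc2ε (Real.exp_pos w).le) hp0.le
    have s2 : (2 * ε * Real.exp w) ^ p = (2:ℝ) ^ p * ε ^ p * (Real.exp w) ^ p := by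
      rw [Real.mul_rpow (by positivity) (Real.exp_pos w).le,
          Real.mul_rpow (by norm_num) hε0.le]
    have s3 : ε ^ p = ε * ε ^ (p - 1) := by
      rw [Real.rpow_sub hε0, Real.rpow_one]
      field_simp
    have s4 : ε ^ (p - 1) ≤ Real.exp (-τ * w) ^ (p - 1) :=
      Real.rpow_le_rpow hε0.le hε1 hp1
    have s5 : Real.exp (-τ * w) ^ (p - 1) = Real.exp (-τ * w * (p - 1)) := by
      rw [← Real.exp_mul]
    have s6 : (Real.exp w) ^ p = Real.exp (w * p) := by rw [← Real.exp_mul]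
    have s7 : (2:ℝ) ^ p = Real.exp (Real.log 2 * p) := by
      rw [Real.rpow_def_of_pos (by norm_num : (0:ℝ) < 2)]
    calc (c * Real.exp w) ^ p ≤ (2 * ε * Real.exp w) ^ p := s1
      _ = (2:ℝ) ^ p * (ε * ε ^ (p - 1)) * (Real.exp w) ^ p := by rw [s2, s3]
      _ ≤ (2:ℝ) ^ p * (ε * Real.exp (-τ * w) ^ (p - 1)) * (Real.exp w) ^ p := by
          gcongr
      _ = ε * (Real.exp (Real.log 2 * p) * Real.exp (-τ * w * (p - 1)) *
            Real.exp (w * p)) := by rw [s5, s6, s7]; ring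
      _ = ε * Real.exp E := by
          rw [← Real.exp_add, ← Real.exp_add]
          congr 1
          rw [hE_def, hp_def]
          field_simp
          ring
  have key2 : Real.exp (-(1 - δ) * m) ≤ Real.exp (K - w) := by
    have h1 : U (Real.pi / 2) * (a / (Real.pi / 2)) ^ (1 - δ) ≤ U a :=
      hkey a (Real.pi / 2) ha0 haπ2 le_rfl
    rw [hUa] at h1
    have hq0 : 0 < a / (Real.pi / 2) := by positivity
    have h2 : Real.log (U (Real.pi / 2) * (a / (Real.pi / 2)) ^ (1 - δ)) ≤ -w := by
      calc Real.log (U (Real.pi / 2) * (a / (Real.pi / 2)) ^ (1 - δ))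
          ≤ Real.log (Real.exp (-w)) := Real.log_le_log (by positivity) h1
        _ = -w := Real.log_exp _
    rw [Real.log_mul hUπ2.ne' (Real.rpow_pos_of_pos hq0 _).ne', Real.log_rpow hq0,
        Real.log_div ha0.ne' (by positivity : (0:ℝ) < Real.pi / 2).ne'] at h2
    have hla : Real.log a = -m := by rw [ha_def, Real.log_exp]
    rw [hla] at h2
    apply Real.exp_le_exp.2
    simp only [hK_def]
    linarith [h2]
  have key3 : E + (K - w) ≤ Real.log Real.pi := by
    have hq : E = (Real.log 2 + w * (1 - τ * δ)) / (1 - δ) := by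
      rw [hE_def, hp_def]; ring
    rw [hq]
    have h3 : (Real.log 2 + w * (1 - τ * δ)) / (1 - δ)
        ≤ Real.log Real.pi - K + w := by
      rw [div_le_iff₀ h1δ]
      have hC' := hwC
      simp only [hC_def] at hC'
      linarith [hC']
    linarith
  have key4 : Real.exp E * Real.exp (K - w) ≤ Real.pi := by
    rw [← Real.exp_add]
    calc Real.exp (E + (K - w)) ≤ Real.exp (Real.log Real.pi) :=
          Real.exp_le_exp.2 key3
      _ = Real.pi := Real.exp_log hπ
  have hbfin : b ≤ ε * (Real.exp (-(δ * m)) * Real.pi) := by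
    have e1 : a = Real.exp (-(δ * m)) * Real.exp (-(1 - δ) * m) := by
      rw [ha_def, ← Real.exp_add]; congr 1; ring
    calc b = a * (c * Real.exp w) ^ p := hb_def
      _ ≤ a * (ε * Real.exp E) := mul_le_mul_of_nonneg_left key1 ha0.le
      _ = ε * (Real.exp (-(δ * m)) * (Real.exp (-(1 - δ) * m) * Real.exp E)) := by
          rw [e1]; ring
      _ ≤ ε * (Real.exp (-(δ * m)) * (Real.exp (K - w) * Real.exp E)) := by
          exact mul_le_mul_of_nonneg_left (mul_le_mul_of_nonneg_left
            (mul_le_mul_of_nonneg_right key2 (Real.exp_pos _).le)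
            (Real.exp_pos _).le) hε0.le
      _ ≤ ε * (Real.exp (-(δ * m)) * Real.pi) := by
          have hEK : Real.exp (K - w) * Real.exp E ≤ Real.pi := by
            rw [mul_comm]; exact key4
          exact mul_le_mul_of_nonneg_left
            (mul_le_mul_of_nonneg_left hEK (Real.exp_pos _).le) hε0.le
  have hgoal_exp : Real.exp (-δ * (n : ℝ) / w) = Real.exp (-(δ * m)) := by
    congr 1
    rw [hm_def]
    ring
  rw [div_le_iff₀ (by positivity : (0:ℝ) < 2 * Real.pi)]
  calc (volume {t : ℝ | t ∈ Set.Icc (-Real.pi) Real.pi ∧ r < ‖φ t‖ ∧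
        φ t ∈ carlesonSquare (1 - ε) t₀}).toReal ≤ 2 * b := hμ
    _ ≤ 2 * (ε * (Real.exp (-(δ * m)) * Real.pi)) := by linarith
    _ = Real.exp (-(δ * m)) * ε * (2 * Real.pi) := by ring
    _ = Real.exp (-δ * (n : ℝ) / w) * ε * (2 * Real.pi) := by rw [hgoal_exp]

end
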